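/- Let t ≥ 2, let H be a t-uniform hypergraph on a finite vertex set U, and let x be any legal weighting. Then w(x,H) ≤ (1/t) · ∑_{u∈U} x(u)(1−x(u))^{t−1} · λ(H(u)), where H(u) denotes the link hypergraph of u. -/

import Mathlib

/-- A legal weighting: nonnegative weights summing to 1. -/
def IsLegalWeighting {U : Type*} [Fintype U] (x : U → ℝ) : Prop :=
  (∀ u, 0 ≤ x u) ∧ ∑ u, x u = 1

/-- The weight polynomial of a hypergraph evaluated at a weighting. -/
def weightPoly {U : Type*} [Fintype U] (H : Finset (Finset U)) (x : U → ℝ) : ℝ :=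
  ∑ e ∈ H, ∏ u ∈ e, x u

/-- The Lagrangian of a hypergraph. -/
noncomputable def lagrangian {U : Type*} [Fintype U] (H : Finset (Finset U)) : ℝ :=
  sSup {w | ∃ x, IsLegalWeighting x ∧ weightPoly H x = w}

/-- The link hypergraph of a vertex `u`: the `(t-1)`-uniform hypergraph whose edges are
the sets `e'` with `e' ∪ {u} ∈ H`. -/
def linkHypergraph {U : Type*} [Fintype U] [DecidableEq U]
    (H : Finset (Finset U)) (u : U) : Finset (Finset U) :=
  (H.filter fun e => u ∈ e).image fun e => e.erase u

lemma legal_le_one {U : Type*} [Fintype U] {x : U → ℝ} (hx : IsLegalWeighting x) (u : U) :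
    x u ≤ 1 := by
  have := Finset.single_le_sum (f := x) (fun i _ => hx.1 i) (Finset.mem_univ u)
  simpa [hx.2] using this

lemma weightPoly_le_lagrangian {U : Type*} [Fintype U] (H : Finset (Finset U)) {x : U → ℝ}
    (hx : IsLegalWeighting x) : weightPoly H x ≤ lagrangian H := by
  apply le_csSup
  · refine ⟨H.card, ?_⟩
    rintro w ⟨y, hy, rfl⟩
    calc weightPoly H y ≤ ∑ _e ∈ H, (1 : ℝ) := by
          refine Finset.sum_le_sum fun e _ => ?_
          exact Finset.prod_le_one (fun v _ => hy.1 v) (fun v _ => legal_le_one hy v)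
      _ = H.card := by simp
  · exact ⟨x, hx, rfl⟩

lemma link_mem {U : Type*} [Fintype U] [DecidableEq U] {H : Finset (Finset U)} {u : U}
    {e' : Finset U} (he' : e' ∈ linkHypergraph H u) :
    u ∉ e' ∧ ∃ e ∈ H, u ∈ e ∧ e' = e.erase u := by
  simp only [linkHypergraph, Finset.mem_image, Finset.mem_filter] at he'
  obtain ⟨e, ⟨heH, hue⟩, rfl⟩ := he'
  exact ⟨Finset.notMem_erase u e, e, heH, hue, rfl⟩

lemma link_sum {U : Type*} [Fintype U] [DecidableEq U] (H : Finset (Finset U)) (u : U)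
    (x : U → ℝ) :
    x u * weightPoly (linkHypergraph H u) x
      = ∑ e ∈ H.filter (fun e => u ∈ e), ∏ v ∈ e, x v := by
  unfold weightPoly linkHypergraph
  rw [Finset.sum_image, Finset.mul_sum]
  · refine Finset.sum_congr rfl fun e he => ?_
    exact Finset.mul_prod_erase e x (Finset.mem_filter.mp he).2
  · intro e1 h1 e2 h2 h
    have h1u := (Finset.mem_filter.mp h1).2
    have h2u := (Finset.mem_filter.mp h2).2
    rw [← Finset.insert_erase h1u, ← Finset.insert_erase h2u, show e1.erase u = e2.erase u from h]

/-- The weight polynomial is bounded via the Lagrangians of the links. -/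
theorem weightPoly_le_link_lagrangian {U : Type*} [Fintype U] [DecidableEq U]
    (t : ℕ) (ht : 2 ≤ t)
    (H : Finset (Finset U)) (hH : ∀ e ∈ H, e.card = t)
    (x : U → ℝ) (hx : IsLegalWeighting x) :
    weightPoly H x ≤
      (1 / t) * ∑ u, x u * (1 - x u) ^ (t - 1) * lagrangian (linkHypergraph H u) := by
  obtain ⟨hx0, hx1⟩ := hx
  have ht0 : (0:ℝ) < t := by
    have : (2:ℝ) ≤ t := by exact_mod_cast ht
    linarith
  have ht1 : t - 1 ≠ 0 := by omega
  -- key identity : t * w = ∑_u x u * w(link u)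
  have hsum : (t : ℝ) * weightPoly H x = ∑ u, x u * weightPoly (linkHypergraph H u) x := by
    simp_rw [link_sum, Finset.sum_filter]
    rw [Finset.sum_comm]
    unfold weightPoly
    rw [Finset.mul_sum]
    refine Finset.sum_congr rfl fun e he => ?_
    rw [Finset.sum_ite_mem, Finset.univ_inter, Finset.sum_const, nsmul_eq_mul, hH e he]
  -- termwise inequality
  have hterm : ∀ u, x u * weightPoly (linkHypergraph H u) x
      ≤ x u * (1 - x u) ^ (t - 1) * lagrangian (linkHypergraph H u) := by
    intro u
    rcases lt_or_eq_of_le (legal_le_one ⟨hx0, hx1⟩ u) with hlt | heq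
    · -- x u < 1
      set c : ℝ := 1 - x u with hc
      have hcpos : 0 < c := by simp [hc]; linarith
      set y : U → ℝ := Function.update (fun v => x v / c) u 0 with hy
      have hyleg : IsLegalWeighting y := by
        constructor
        · intro v
          rcases eq_or_ne v u with rfl | hvu
          · simp [hy]
          · rw [hy, Function.update_of_ne hvu]
            exact div_nonneg (hx0 v) hcpos.le
        · rw [hy, Finset.sum_update_of_mem (Finset.mem_univ u)]
          have : ∑ v ∈ Finset.univ \ {u}, x v / c = (∑ v ∈ Finset.univ \ {u}, x v) / c :=
            Finset.sum_div _ _ _ |>.symm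
          rw [this]
          have hsub : ∑ v ∈ Finset.univ \ {u}, x v = 1 - x u := by
            rw [Finset.sdiff_singleton_eq_erase]
            have := Finset.add_sum_erase Finset.univ x (Finset.mem_univ u)
            rw [hx1] at this
            linarith
          rw [hsub, ← hc, div_self hcpos.ne']
          ring
      have hprod : ∀ e' ∈ linkHypergraph H u, ∏ v ∈ e', y v = (∏ v ∈ e', x v) / c ^ (t - 1) := by
        intro e' he'
        obtain ⟨hue', e, heH, hue, rfl⟩ := link_mem he'
        have hcard : (e.erase u).card = t - 1 := by
          rw [Finset.card_erase_of_mem hue, hH e heH]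
        have : ∀ v ∈ e.erase u, y v = x v / c := by
          intro v hv
          rw [hy, Function.update_of_ne (Finset.ne_of_mem_erase hv)]
        rw [Finset.prod_congr rfl this, Finset.prod_div_distrib, Finset.prod_const, hcard]
      have hwy : weightPoly (linkHypergraph H u) y
          = weightPoly (linkHypergraph H u) x / c ^ (t - 1) := by
        unfold weightPoly
        rw [Finset.sum_congr rfl hprod, ← Finset.sum_div]
      have hwx : weightPoly (linkHypergraph H u) x
          = c ^ (t - 1) * weightPoly (linkHypergraph H u) y := by
        rw [hwy]
        field_simp
      have hle : weightPoly (linkHypergraph H u) y ≤ lagrangian (linkHypergraph H u) :=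
        weightPoly_le_lagrangian _ hyleg
      have hcp : (0:ℝ) ≤ c ^ (t - 1) := by positivity
      calc x u * weightPoly (linkHypergraph H u) x
          = x u * (c ^ (t - 1) * weightPoly (linkHypergraph H u) y) := by rw [hwx]
        _ ≤ x u * (c ^ (t - 1) * lagrangian (linkHypergraph H u)) := by
            exact mul_le_mul_of_nonneg_left
              (mul_le_mul_of_nonneg_left hle hcp) (hx0 u)
        _ = x u * (1 - x u) ^ (t - 1) * lagrangian (linkHypergraph H u) := by
            rw [hc]; ring
    · -- x u = 1
      have hxz : ∀ v, v ≠ u → x v = 0 := by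
        intro v hvu
        have hsub : ∑ w ∈ Finset.univ.erase u, x w = 0 := by
          have := Finset.add_sum_erase Finset.univ x (Finset.mem_univ u)
          rw [hx1] at this
          linarith [heq]
        have := (Finset.sum_eq_zero_iff_of_nonneg (fun w _ => hx0 w)).mp hsub v
          (Finset.mem_erase.mpr ⟨hvu, Finset.mem_univ v⟩)
        exact this
      have hlhs : weightPoly (linkHypergraph H u) x = 0 := by
        unfold weightPoly
        refine Finset.sum_eq_zero fun e' he' => ?_
        obtain ⟨hue', e, heH, hue, rfl⟩ := link_mem he'
        have hcard : (e.erase u).card = t - 1 := by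
          rw [Finset.card_erase_of_mem hue, hH e heH]
        have hne : (e.erase u).Nonempty := by
          rw [← Finset.card_pos, hcard]; omega
        obtain ⟨v, hv⟩ := hne
        exact Finset.prod_eq_zero hv (hxz v (Finset.ne_of_mem_erase hv))
      rw [hlhs, heq, mul_zero]
      simp [zero_pow ht1]
  calc weightPoly H x = (1 / t) * ((t : ℝ) * weightPoly H x) := by field_simp
    _ = (1 / t) * ∑ u, x u * weightPoly (linkHypergraph H u) x := by rw [hsum]
    _ ≤ (1 / t) * ∑ u, x u * (1 - x u) ^ (t - 1) * lagrangian (linkHypergraph H u) := by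
        refine mul_le_mul_of_nonneg_left (Finset.sum_le_sum fun u _ => hterm u) ?_
        positivity
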